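/- Let G be a finite tree (acyclic connected graph) on vertices {1,...,n}, n ≥ 2, with N_i the neighbor set of vertex i. Let θ_1,...,θ_n be positive reals with θ_i + θ_j < 1 for every edge (i,j). Set ν_i = θ_i (1−θ_i)^{|N_i|−1} / ∏_{j∈N_i}(1−θ_i−θ_j). Then in the hard-core distribution π(z) ∝ ∏_i ν_i^{z_i} over independent-set indicator vectors of G, the marginal probability that vertex i is active equals θ_i for all i. -/

import Mathlib

open scoped Classical
open Finset

/-- Weight of a 0-1 configuration `z` with back-off rates `ν`. -/
noncomputable def hcWeight {n : ℕ} (ν : Fin n → ℝ) (z : Fin n → Bool) : ℝ :=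
  ∏ i, if z i then ν i else 1

/-- `z` is an independent-set indicator vector for adjacency `A`. -/
def hcIndep {n : ℕ} (A : Fin n → Fin n → Prop) (z : Fin n → Bool) : Prop :=
  ∀ i j, A i j → ¬(z i = true ∧ z j = true)

/-- Normalizing constant of the hard-core model. -/
noncomputable def hcZ (n : ℕ) (A : Fin n → Fin n → Prop) (ν : Fin n → ℝ) : ℝ :=
  ∑ z : Fin n → Bool, if hcIndep A z then hcWeight ν z else 0

/-- Marginal activity probability of node `i` in the hard-core model. -/
noncomputable def hcMarginal (n : ℕ) (A : Fin n → Fin n → Prop) (ν : Fin n → ℝ)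
    (i : Fin n) : ℝ :=
  (∑ z : Fin n → Bool, if hcIndep A z ∧ z i = true then hcWeight ν z else 0) / hcZ n A ν

namespace HCaux

variable {n : ℕ}

/-- symmetric edge factor -/
noncomputable def hcH (θ : Fin n → ℝ) (z : Fin n → Bool) (i j : Fin n) : ℝ :=
  if z i then (if z j then 0 else (1 - θ j)⁻¹)
  else if z j then (1 - θ i)⁻¹
  else (1 - θ i - θ j) / ((1 - θ i) * (1 - θ j))

lemma hcH_symm (θ : Fin n → ℝ) (z : Fin n → Bool) (i j : Fin n) :
    hcH θ z i j = hcH θ z j i := by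
  unfold hcH
  rcases hzi : z i <;> rcases hzj : z j <;> simp [hzi, hzj] <;> ring_nf

lemma hcH_congr (θ : Fin n → ℝ) {z y : Fin n → Bool} {i j : Fin n}
    (hi : z i = y i) (hj : z j = y j) : hcH θ z i j = hcH θ y i j := by
  unfold hcH; rw [hi, hj]

noncomputable def hcK (θ : Fin n → ℝ) (z : Fin n → Bool) : Sym2 (Fin n) → ℝ :=
  Sym2.lift ⟨fun i j => hcH θ z i j, fun i j => hcH_symm θ z i j⟩

@[simp] lemma hcK_mk (θ : Fin n → ℝ) (z : Fin n → Bool) (i j : Fin n) :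
    hcK θ z s(i, j) = hcH θ z i j := rfl

/-- edge finset (classical) -/
noncomputable def hcEF (G : SimpleGraph (Fin n)) : Finset (Sym2 (Fin n)) :=
  Finset.univ.filter (· ∈ G.edgeSet)

lemma mem_hcEF {G : SimpleGraph (Fin n)} {e : Sym2 (Fin n)} :
    e ∈ hcEF G ↔ e ∈ G.edgeSet := by simp [hcEF]

noncomputable def hcR (G : SimpleGraph (Fin n)) (θ : Fin n → ℝ) (z : Fin n → Bool) : ℝ :=
  (∏ i, if z i then θ i else 1 - θ i) * ∏ e ∈ hcEF G, hcK θ z e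

noncomputable def hcT (G : SimpleGraph (Fin n)) (θ : Fin n → ℝ)
    (f : (Fin n → Bool) → ℝ) : ℝ :=
  ∑ z : Fin n → Bool, if hcIndep G.Adj z then hcR G θ z * f z else 0

/-- pairing a sum over configurations along the value at one site -/
lemma sum_pair (ℓ : Fin n) (F : (Fin n → Bool) → ℝ) :
    ∑ z : Fin n → Bool, F z
      = ∑ z : Fin n → Bool,
          if z ℓ = false then F z + F (Function.update z ℓ true) else 0 := by
  have hinv : Function.Involutive (fun z : Fin n → Bool => Function.update z ℓ (!(z ℓ))) := by
    intro z
    funext x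
    by_cases hx : x = ℓ <;> simp [Function.update, hx]
  set e : (Fin n → Bool) ≃ (Fin n → Bool) := hinv.toPerm _ with he
  have h1 : ∀ z : Fin n → Bool, F z
      = (if z ℓ = false then F z else 0) + (if z ℓ = false then 0 else F z) := by
    intro z; by_cases h : z ℓ = false <;> simp [h]
  rw [Finset.sum_congr rfl (fun z _ => h1 z), Finset.sum_add_distrib]
  have h2 : ∑ z : Fin n → Bool, (if z ℓ = false then 0 else F z)
      = ∑ z : Fin n → Bool, (if z ℓ = false then F (Function.update z ℓ true) else 0) := by
    rw [← Equiv.sum_comp e (fun z => if z ℓ = false then 0 else F z)]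
    apply Finset.sum_congr rfl
    intro z _
    have hez : (e z) = Function.update z ℓ (!(z ℓ)) := rfl
    by_cases h : z ℓ = false
    · simp [hez, h]
    · simp only [Bool.not_eq_false] at h
      simp [hez, h]
  rw [h2, ← Finset.sum_add_distrib]
  apply Finset.sum_congr rfl
  intro z _
  by_cases h : z ℓ = false <;> simp [h]

/-- an acyclic graph with an edge has a leaf -/
lemma exists_leaf (G : SimpleGraph (Fin n)) (hac : G.IsAcyclic) {a b : Fin n}
    (hab : G.Adj a b) : ∃ ℓ p, G.Adj ℓ p ∧ ∀ y, G.Adj ℓ y → y = p := by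
  set S : Finset ℕ := (Finset.range (n + 1)).filter
    (fun k => ∃ u v : Fin n, ∃ p : G.Walk u v, p.IsPath ∧ p.length = k) with hS
  have hone : (1 : ℕ) ∈ S := by
    rw [hS]
    refine Finset.mem_filter.2 ⟨?_, a, b, SimpleGraph.Walk.cons hab SimpleGraph.Walk.nil,
      ?_, by simp⟩
    · have := a.pos
      simp [Finset.mem_range]; omega
    · simp [SimpleGraph.Walk.cons_isPath_iff, hab.ne]
  have hne : S.Nonempty := ⟨1, hone⟩
  set k := S.max' hne with hk
  obtain ⟨hkrange, u, v, p, hp, hlen⟩ := Finset.mem_filter.1 (S.max'_mem hne)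
  have hk1 : 1 ≤ k := Finset.le_max' S 1 hone
  cases p with
  | nil => simp at hlen; omega
  | @cons u x v h q =>
    refine ⟨u, x, h, fun y hy => ?_⟩
    by_contra hyx
    have hyu : y ≠ u := fun hh => G.irrefl (hh ▸ hy)
    by_cases hmem : y ∈ (SimpleGraph.Walk.cons h q).support
    · have hq' := hp.takeUntil hmem
      have hedge : s(y, u) ∉ ((SimpleGraph.Walk.cons h q).takeUntil y hmem).edges := by
        intro hin
        have hsub : s(y, u) ∈ (SimpleGraph.Walk.cons h q).edges := by
          have := (SimpleGraph.Walk.cons h q).take_spec hmem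
          rw [← this, SimpleGraph.Walk.edges_append]
          exact List.mem_append_left _ hin
        rw [SimpleGraph.Walk.edges_cons] at hsub
        rcases List.mem_cons.1 hsub with heq | hin2
        · rw [Sym2.eq_iff] at heq
          rcases heq with ⟨h1, h2⟩ | ⟨h1, h2⟩
          · exact hyu h1
          · exact hyx h1
        · have : u ∈ q.support := SimpleGraph.Walk.snd_mem_support_of_mem_edges q hin2
          exact ((SimpleGraph.Walk.cons_isPath_iff h q).1 hp).2 this
      have hcyc := SimpleGraph.Path.cons_isCycle
        ⟨(SimpleGraph.Walk.cons h q).takeUntil y hmem, hq'⟩ hy.symm hedge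
      exact hac _ hcyc
    · have hp' : (SimpleGraph.Walk.cons hy.symm (SimpleGraph.Walk.cons h q)).IsPath :=
        (SimpleGraph.Walk.cons_isPath_iff _ _).2 ⟨hp, hmem⟩
      have hlt := hp'.length_lt
      simp only [Fintype.card_fin] at hlt
      have hmem2 : k + 1 ∈ S := by
        rw [hS]
        refine Finset.mem_filter.2 ⟨?_, y, v, _, hp', ?_⟩
        · rw [Finset.mem_range]
          rw [SimpleGraph.Walk.length_cons, hlen] at hlt; omega
        · rw [SimpleGraph.Walk.length_cons, hlen]
      have := Finset.le_max' S _ hmem2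
      omega

/-- base case: no edges -/
lemma hcT_base (G : SimpleGraph (Fin n)) (hE : hcEF G = ∅) (θ : Fin n → ℝ) (i : Fin n) :
    hcT G θ (fun z => if z i then 1 else 0) = θ i * hcT G θ (fun _ => 1) := by
  have hind : ∀ z : Fin n → Bool, hcIndep G.Adj z := by
    intro z a b hab
    exfalso
    have : s(a, b) ∈ hcEF G := mem_hcEF.2 hab
    rw [hE] at this
    simp at this
  have hsum : ∀ f : Fin n → Bool → ℝ,
      ∑ z : Fin n → Bool, ∏ x, f x (z x) = ∏ x, (f x true + f x false) := by
    intro f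
    rw [← Fintype.prod_sum f]
    apply Finset.prod_congr rfl
    intro x _
    simp [Fintype.sum_bool]
  unfold hcT hcR
  rw [hE]
  simp only [Finset.prod_empty, mul_one]
  have h1 : (∑ z : Fin n → Bool,
      if hcIndep G.Adj z then ∏ x, (if z x = true then θ x else 1 - θ x) else 0) = 1 := by
    have heq : ∀ z : Fin n → Bool,
        (if hcIndep G.Adj z then ∏ x, (if z x = true then θ x else 1 - θ x) else 0)
          = ∏ x, (if z x = true then θ x else 1 - θ x) := by
      intro z; rw [if_pos (hind z)]
    rw [Finset.sum_congr rfl (fun z _ => heq z),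
      hsum (fun x b => if b = true then θ x else 1 - θ x)]
    simp
  have h2 : (∑ z : Fin n → Bool,
      if hcIndep G.Adj z then (∏ x, if z x = true then θ x else 1 - θ x)
        * (if z i = true then (1:ℝ) else 0) else 0) = θ i := by
    have heq : ∀ z : Fin n → Bool,
        (if hcIndep G.Adj z then (∏ x, if z x = true then θ x else 1 - θ x)
          * (if z i = true then (1:ℝ) else 0) else 0)
        = ∏ x, (if z x = true then (if x = i then θ x else θ x)
            else (if x = i then 0 else 1 - θ x)) := by
      intro z
      rw [if_pos (hind z)]
      cases hzi : z i
      · simp only [Bool.false_eq_true, if_false, mul_zero]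
        symm
        apply Finset.prod_eq_zero (Finset.mem_univ i)
        rw [hzi]
        simp
      · simp only [if_true, mul_one]
        apply Finset.prod_congr rfl
        intro x _
        by_cases hx : x = i
        · subst hx; rw [hzi]; simp
        · simp [hx]
    rw [Finset.sum_congr rfl (fun z _ => heq z),
      hsum (fun x b => if b = true then (if x = i then θ x else θ x)
        else (if x = i then 0 else 1 - θ x))]
    rw [← Finset.mul_prod_erase Finset.univ _ (Finset.mem_univ i)]
    simp only [ite_true, Bool.false_eq_true, ite_false]
    have hrest : ∀ x ∈ Finset.univ.erase i,
        ((if x = i then θ x else θ x) + (if x = i then 0 else 1 - θ x)) = 1 := by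
      intro x hx
      rw [if_neg (Finset.ne_of_mem_erase hx), if_neg (Finset.ne_of_mem_erase hx)]
      ring
    rw [Finset.prod_congr rfl hrest, Finset.prod_const_one, mul_one]
    simp
  rw [h1, h2, mul_one]


lemma hcIndep_update_iff {A : Fin n → Fin n → Prop} {ℓ : Fin n}
    (hna : ∀ y, ¬ A ℓ y) (hna2 : ∀ y, ¬ A y ℓ) (z : Fin n → Bool) (b : Bool) :
    hcIndep A (Function.update z ℓ b) ↔ hcIndep A z := by
  constructor <;> intro h a c hac hz
  · have ha : a ≠ ℓ := fun hh => hna c (hh ▸ hac)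
    have hc : c ≠ ℓ := fun hh => hna2 a (hh ▸ hac)
    exact h a c hac ⟨by rw [Function.update_of_ne ha]; exact hz.1,
      by rw [Function.update_of_ne hc]; exact hz.2⟩
  · have ha : a ≠ ℓ := fun hh => hna c (hh ▸ hac)
    have hc : c ≠ ℓ := fun hh => hna2 a (hh ▸ hac)
    rw [Function.update_of_ne ha, Function.update_of_ne hc] at hz
    exact h a c hac hz

section Step

variable (G : SimpleGraph (Fin n)) (θ : Fin n → ℝ) (ℓ pv : Fin n)

/-- decomposition facts for deleting the pendant edge -/
lemma hcEF_delete (hadj : G.Adj ℓ pv) :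
    hcEF (G.deleteEdges {s(ℓ, pv)}) = (hcEF G).erase s(ℓ, pv) := by
  ext e
  simp only [mem_hcEF, SimpleGraph.edgeSet_deleteEdges, Set.mem_diff, Set.mem_singleton_iff,
    Finset.mem_erase]
  tauto

lemma hcR_delete (hadj : G.Adj ℓ pv) (z : Fin n → Bool) :
    hcR G θ z = hcR (G.deleteEdges {s(ℓ, pv)}) θ z * hcH θ z ℓ pv := by
  have he₀ : s(ℓ, pv) ∈ hcEF G := mem_hcEF.2 hadj
  unfold hcR
  rw [hcEF_delete G ℓ pv hadj, ← Finset.mul_prod_erase (hcEF G) _ he₀]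
  simp only [hcK_mk]
  ring

lemma not_adj_delete (huniq : ∀ y, G.Adj ℓ y → y = pv) (y : Fin n) :
    ¬ (G.deleteEdges {s(ℓ, pv)}).Adj ℓ y := by
  intro h
  rw [SimpleGraph.deleteEdges_adj] at h
  exact h.2 (by rw [huniq y h.1]; simp)

lemma hcIndep_delete_iff (hadj : G.Adj ℓ pv) (z : Fin n → Bool) :
    hcIndep G.Adj z
      ↔ hcIndep (G.deleteEdges {s(ℓ, pv)}).Adj z ∧ ¬(z ℓ = true ∧ z pv = true) := by
  constructor
  · intro h
    refine ⟨fun a b hab => h a b ((SimpleGraph.deleteEdges_adj).1 hab).1, h ℓ pv hadj⟩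
  · rintro ⟨h', hpair⟩ a b hab hz
    by_cases heq : s(a, b) = s(ℓ, pv)
    · rw [Sym2.eq_iff] at heq
      rcases heq with ⟨rfl, rfl⟩ | ⟨rfl, rfl⟩
      · exact hpair hz
      · exact hpair ⟨hz.2, hz.1⟩
    · exact h' a b ((SimpleGraph.deleteEdges_adj).2
        ⟨hab, by simpa using heq⟩) hz

lemma hcR_delete_update (huniq : ∀ y, G.Adj ℓ y → y = pv) (z : Fin n → Bool)
    (hzℓ : z ℓ = false) :
    (1 - θ ℓ) * hcR (G.deleteEdges {s(ℓ, pv)}) θ (Function.update z ℓ true)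
      = θ ℓ * hcR (G.deleteEdges {s(ℓ, pv)}) θ z := by
  set G' := G.deleteEdges {s(ℓ, pv)} with hG'
  set z1 := Function.update z ℓ true with hz1
  have hme : ∀ e ∈ hcEF G', hcK θ z1 e = hcK θ z e := by
    intro e he
    have hℓe : ¬ ℓ ∈ e := by
      intro hin
      have he' := mem_hcEF.1 he
      induction e with
      | _ a b =>
        rw [SimpleGraph.mem_edgeSet] at he'
        rcases Sym2.mem_iff.1 hin with rfl | rfl
        · exact not_adj_delete G ℓ pv huniq b he'
        · exact not_adj_delete G ℓ pv huniq a he'.symm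
    induction e with
    | _ a b =>
      simp only [hcK_mk]
      apply hcH_congr
      · rw [hz1, Function.update_of_ne (fun h : a = ℓ => hℓe (h ▸ Sym2.mem_mk_left a b))]
      · rw [hz1, Function.update_of_ne (fun h : b = ℓ => hℓe (h ▸ Sym2.mem_mk_right a b))]
  unfold hcR
  rw [Finset.prod_congr rfl hme]
  rw [← Finset.mul_prod_erase Finset.univ _ (Finset.mem_univ ℓ),
    ← Finset.mul_prod_erase Finset.univ
      (fun x => if z x then θ x else 1 - θ x) (Finset.mem_univ ℓ)]
  have h1 : z1 ℓ = true := by rw [hz1]; simp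
  have h2 : ∀ x ∈ Finset.univ.erase ℓ,
      (if z1 x then θ x else 1 - θ x) = (if z x then θ x else 1 - θ x) := by
    intro x hx
    rw [hz1, Function.update_of_ne (Finset.ne_of_mem_erase hx)]
  rw [Finset.prod_congr rfl h2, h1, hzℓ]
  simp only [if_true, Bool.false_eq_true, if_false]
  ring

lemma hcT_delete (hadj : G.Adj ℓ pv) (huniq : ∀ y, G.Adj ℓ y → y = pv)
    (hθpos : ∀ i, 0 < θ i) (hθ : ∀ i j, G.Adj i j → θ i + θ j < 1)
    (f : (Fin n → Bool) → ℝ) (hf : ∀ z, f (Function.update z ℓ true) = f z) :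
    hcT G θ f = hcT (G.deleteEdges {s(ℓ, pv)}) θ f := by
  set G' := G.deleteEdges {s(ℓ, pv)} with hG'
  have hℓp : ℓ ≠ pv := hadj.ne
  have h1ℓ : (1:ℝ) - θ ℓ ≠ 0 := by
    have := hθ ℓ pv hadj; have := hθpos pv; intro h; linarith
  have h1p : (1:ℝ) - θ pv ≠ 0 := by
    have := hθ ℓ pv hadj; have := hθpos ℓ; intro h; linarith
  unfold hcT
  rw [sum_pair ℓ (fun z => if hcIndep G.Adj z then hcR G θ z * f z else 0),
    sum_pair ℓ (fun z => if hcIndep G'.Adj z then hcR G' θ z * f z else 0)]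
  apply Finset.sum_congr rfl
  intro z _
  by_cases hzℓ : z ℓ = false
  swap
  · rw [if_neg hzℓ, if_neg hzℓ]
  rw [if_pos hzℓ, if_pos hzℓ]
  set z1 := Function.update z ℓ true with hz1
  have hfz : f z1 = f z := hf z
  have hz1ℓ : z1 ℓ = true := by rw [hz1]; simp
  have hz1p : z1 pv = z pv := by rw [hz1, Function.update_of_ne (Ne.symm hℓp)]
  have hupdate_iff := hcIndep_update_iff (A := G'.Adj)
    (fun y => not_adj_delete G ℓ pv huniq y)
    (fun y h => not_adj_delete G ℓ pv huniq y h.symm) z true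
  by_cases h' : hcIndep G'.Adj z
  · have hz1' : hcIndep G'.Adj z1 := hupdate_iff.2 h'
    have hIz : hcIndep G.Adj z := (hcIndep_delete_iff G ℓ pv hadj z).2
      ⟨h', by rw [hzℓ]; simp⟩
    have hRz := hcR_delete G θ ℓ pv hadj z
    have hRz1 := hcR_delete G θ ℓ pv hadj z1
    have hRu := hcR_delete_update G θ ℓ pv huniq z hzℓ
    rw [← hz1] at hRu
    cases hzp : z pv
    · -- pv inactive : both configurations independent in G
      have hIz1 : hcIndep G.Adj z1 := (hcIndep_delete_iff G ℓ pv hadj z1).2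
        ⟨hz1', by rw [hz1p, hzp]; simp⟩
      rw [if_pos hIz, if_pos hIz1, if_pos h', if_pos hz1', hfz, hRz, hRz1]
      have hH : hcH θ z ℓ pv = (1 - θ ℓ - θ pv) / ((1 - θ ℓ) * (1 - θ pv)) := by
        simp [hcH, hzℓ, hzp]
      have hH1 : hcH θ z1 ℓ pv = (1 - θ pv)⁻¹ := by
        simp [hcH, hz1ℓ, hz1p, hzp]
      rw [hH, hH1]
      have hRu' : hcR G' θ z1 = θ ℓ / (1 - θ ℓ) * hcR G' θ z := by
        field_simp
        linarith [hRu]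
      rw [hRu', ← hG']
      field_simp
      try ring
    · -- pv active : the flipped configuration is not independent in G
      have hIz1 : ¬ hcIndep G.Adj z1 := by
        intro h
        exact ((hcIndep_delete_iff G ℓ pv hadj z1).1 h).2 ⟨hz1ℓ, by rw [hz1p, hzp]⟩
      rw [if_pos hIz, if_neg hIz1, if_pos h', if_pos hz1', hfz, hRz]
      have hH : hcH θ z ℓ pv = (1 - θ ℓ)⁻¹ := by
        simp [hcH, hzℓ, hzp]
      rw [hH]
      have hRu' : hcR G' θ z1 = θ ℓ / (1 - θ ℓ) * hcR G' θ z := by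
        field_simp
        linarith [hRu]
      rw [hRu', ← hG']
      field_simp
      try ring
  · have hnIz : ¬ hcIndep G.Adj z := fun h =>
      h' ((hcIndep_delete_iff G ℓ pv hadj z).1 h).1
    have hnz1' : ¬ hcIndep G'.Adj z1 := fun h => h' (hupdate_iff.1 h)
    have hnIz1 : ¬ hcIndep G.Adj z1 := fun h =>
      hnz1' ((hcIndep_delete_iff G ℓ pv hadj z1).1 h).1
    rw [if_neg hnIz, if_neg hnIz1, if_neg h', if_neg hnz1']
    try simp

lemma hcT_leaf (hadj : G.Adj ℓ pv) (huniq : ∀ y, G.Adj ℓ y → y = pv)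
    (hθpos : ∀ i, 0 < θ i) (hθ : ∀ i j, G.Adj i j → θ i + θ j < 1) :
    hcT G θ (fun z => if z ℓ then 1 else 0)
      = θ ℓ / (1 - θ pv)
        * hcT (G.deleteEdges {s(ℓ, pv)}) θ (fun z => if z pv then 0 else 1) := by
  set G' := G.deleteEdges {s(ℓ, pv)} with hG'
  have hℓp : ℓ ≠ pv := hadj.ne
  have h1ℓ : (1:ℝ) - θ ℓ ≠ 0 := by
    have := hθ ℓ pv hadj; have := hθpos pv; intro h; linarith
  have h1p : (1:ℝ) - θ pv ≠ 0 := by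
    have := hθ ℓ pv hadj; have := hθpos ℓ; intro h; linarith
  unfold hcT
  rw [sum_pair ℓ (fun z => if hcIndep G.Adj z
      then hcR G θ z * (if z ℓ then 1 else 0) else 0),
    Finset.mul_sum,
    sum_pair ℓ (fun z => θ ℓ / (1 - θ pv) * (if hcIndep G'.Adj z
      then hcR G' θ z * (if z pv then 0 else 1) else 0))]
  apply Finset.sum_congr rfl
  intro z _
  by_cases hzℓ : z ℓ = false
  swap
  · rw [if_neg hzℓ, if_neg hzℓ]
  rw [if_pos hzℓ, if_pos hzℓ]
  set z1 := Function.update z ℓ true with hz1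
  have hz1ℓ : z1 ℓ = true := by rw [hz1]; simp
  have hz1p : z1 pv = z pv := by rw [hz1, Function.update_of_ne (Ne.symm hℓp)]
  have hupdate_iff := hcIndep_update_iff (A := G'.Adj)
    (fun y => not_adj_delete G ℓ pv huniq y)
    (fun y h => not_adj_delete G ℓ pv huniq y h.symm) z true
  by_cases h' : hcIndep G'.Adj z
  · have hz1' : hcIndep G'.Adj z1 := hupdate_iff.2 h'
    have hIz : hcIndep G.Adj z := (hcIndep_delete_iff G ℓ pv hadj z).2
      ⟨h', by rw [hzℓ]; simp⟩
    have hRz1 := hcR_delete G θ ℓ pv hadj z1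
    have hRu := hcR_delete_update G θ ℓ pv huniq z hzℓ
    rw [← hz1] at hRu
    cases hzp : z pv
    · have hIz1 : hcIndep G.Adj z1 := (hcIndep_delete_iff G ℓ pv hadj z1).2
        ⟨hz1', by rw [hz1p, hzp]; simp⟩
      rw [if_pos hIz, if_pos hIz1, if_pos h', if_pos hz1', hRz1]
      have hH1 : hcH θ z1 ℓ pv = (1 - θ pv)⁻¹ := by
        simp [hcH, hz1ℓ, hz1p, hzp]
      have hRu' : hcR G' θ z1 = θ ℓ / (1 - θ ℓ) * hcR G' θ z := by
        field_simp
        linarith [hRu]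
      rw [hH1, hRu']
      simp only [hzℓ, hz1ℓ, hz1p, hzp, Bool.false_eq_true, if_false, if_true,
        mul_zero, mul_one, zero_add, one_mul]
      field_simp
      try ring
    · have hIz1 : ¬ hcIndep G.Adj z1 := by
        intro h
        exact ((hcIndep_delete_iff G ℓ pv hadj z1).1 h).2 ⟨hz1ℓ, by rw [hz1p, hzp]⟩
      rw [if_pos hIz, if_neg hIz1, if_pos h', if_pos hz1']
      simp [hzℓ, hz1p, hzp]
  · have hnIz : ¬ hcIndep G.Adj z := fun h =>
      h' ((hcIndep_delete_iff G ℓ pv hadj z).1 h).1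
    have hnz1' : ¬ hcIndep G'.Adj z1 := fun h => h' (hupdate_iff.1 h)
    have hnIz1 : ¬ hcIndep G.Adj z1 := fun h =>
      hnz1' ((hcIndep_delete_iff G ℓ pv hadj z1).1 h).1
    rw [if_neg hnIz, if_neg hnIz1, if_neg h', if_neg hnz1']
    try simp

end Step

/-- main induction : marginals of the Markov-field weight are the θ's, for acyclic graphs -/
lemma hcT_marg (θ : Fin n → ℝ) (hθpos : ∀ i, 0 < θ i) :
    ∀ (k : ℕ) (G : SimpleGraph (Fin n)), (hcEF G).card = k → G.IsAcyclic →
      (∀ i j, G.Adj i j → θ i + θ j < 1) →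
      ∀ i, hcT G θ (fun z => if z i then 1 else 0) = θ i * hcT G θ (fun _ => 1) := by
  intro k
  induction k using Nat.strong_induction_on with
  | _ k ih =>
    intro G hcard hac hθ i
    rcases Finset.eq_empty_or_nonempty (hcEF G) with hE | hne
    · exact hcT_base G hE θ i
    · obtain ⟨e, he⟩ := hne
      have hex : ∃ a b : Fin n, G.Adj a b := by
        have he' := mem_hcEF.1 he
        induction e with
        | _ a b => exact ⟨a, b, he'⟩
      obtain ⟨a, b, hab⟩ := hex
      obtain ⟨ℓ, pv, hadj, huniq⟩ := exists_leaf G hac hab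
      have he₀ : s(ℓ, pv) ∈ hcEF G := mem_hcEF.2 hadj
      have hcard' : (hcEF (G.deleteEdges {s(ℓ, pv)})).card < k := by
        rw [hcEF_delete G ℓ pv hadj, Finset.card_erase_of_mem he₀, hcard]
        have h1 : 1 ≤ k := by rw [← hcard]; exact Finset.card_pos.2 ⟨e, he⟩
        omega
      have hac' : (G.deleteEdges {s(ℓ, pv)}).IsAcyclic := by
        intro v c hc
        exact hac _ (hc.mapLe (SimpleGraph.deleteEdges_le _))
      have hθ' : ∀ i j, (G.deleteEdges {s(ℓ, pv)}).Adj i j → θ i + θ j < 1 := fun i j h =>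
        hθ i j ((SimpleGraph.deleteEdges_adj).1 h).1
      have IH := ih _ hcard' (G.deleteEdges {s(ℓ, pv)}) rfl hac' hθ'
      have hT1 : hcT G θ (fun _ => 1) = hcT (G.deleteEdges {s(ℓ, pv)}) θ (fun _ => 1) :=
        hcT_delete G θ ℓ pv hadj huniq hθpos hθ _ (fun z => rfl)
      have h1p : (1:ℝ) - θ pv ≠ 0 := by
        have := hθ ℓ pv hadj; have := hθpos ℓ; intro h; linarith
      by_cases hiℓ : i = ℓ
      · subst hiℓ
        rw [hcT_leaf G θ i pv hadj huniq hθpos hθ]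
        have hsub : hcT (G.deleteEdges {s(i, pv)}) θ (fun z => if z pv then 0 else 1)
            = hcT (G.deleteEdges {s(i, pv)}) θ (fun _ => 1)
              - hcT (G.deleteEdges {s(i, pv)}) θ (fun z => if z pv then 1 else 0) := by
          unfold hcT
          rw [← Finset.sum_sub_distrib]
          apply Finset.sum_congr rfl
          intro z _
          by_cases hz : hcIndep (G.deleteEdges {s(i, pv)}).Adj z
          · rw [if_pos hz, if_pos hz, if_pos hz]
            cases hzp : z pv <;> simp [hzp]
          · rw [if_neg hz, if_neg hz, if_neg hz]; ring
        rw [hsub, IH pv, hT1]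
        field_simp
      · have hfi : ∀ z : Fin n → Bool,
            (if (Function.update z ℓ true) i = true then (1:ℝ) else 0)
              = (if z i = true then 1 else 0) := fun z => by
          rw [Function.update_of_ne hiℓ]
        rw [hcT_delete G θ ℓ pv hadj huniq hθpos hθ _ hfi, IH i, hT1]

/-- incident edges product reindex -/
lemma prod_incident (G : SimpleGraph (Fin n)) [DecidableRel G.Adj] (i : Fin n)
    (F : Sym2 (Fin n) → ℝ) :
    ∏ e ∈ (hcEF G).filter (fun e => i ∈ e), F e
      = ∏ j ∈ G.neighborFinset i, F s(i, j) := by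
  rw [show (hcEF G).filter (fun e => i ∈ e)
      = (G.neighborFinset i).image (fun j => s(i, j)) from ?_]
  · rw [Finset.prod_image]
    intro a ha b hb hab
    exact (Sym2.congr_right).1 hab
  · ext e
    simp only [Finset.mem_filter, mem_hcEF, Finset.mem_image,
      SimpleGraph.mem_neighborFinset]
    constructor
    · rintro ⟨he, hie⟩
      induction e with
      | _ a b =>
        rw [SimpleGraph.mem_edgeSet] at he
        rcases Sym2.mem_iff.1 hie with rfl | rfl
        · exact ⟨b, he, rfl⟩
        · exact ⟨a, he.symm, Sym2.eq_swap⟩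
    · rintro ⟨j, hj, rfl⟩
      exact ⟨hj, Sym2.mem_mk_left i j⟩

/-- flip lemma for hcR -/
lemma hcR_flip (G : SimpleGraph (Fin n)) [DecidableRel G.Adj] (θ : Fin n → ℝ)
    (hθpos : ∀ i, 0 < θ i) (hθ : ∀ i j, G.Adj i j → θ i + θ j < 1)
    (ν : Fin n → ℝ)
    (hν : ∀ i, ν i = θ i * (1 - θ i) ^ (G.degree i - 1) /
      ∏ j ∈ G.neighborFinset i, (1 - θ i - θ j))
    {z : Fin n → Bool} (hind : hcIndep G.Adj z) {i : Fin n} (hi : z i = true)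
    (hdeg : 0 < G.degree i) :
    hcR G θ z = ν i * hcR G θ (Function.update z i false) := by
  set z' := Function.update z i false with hz'
  -- basic positivity facts
  have hedge : ∀ j ∈ G.neighborFinset i, 0 < θ i ∧ 0 < θ j ∧ θ i + θ j < 1 := by
    intro j hj
    rw [SimpleGraph.mem_neighborFinset] at hj
    exact ⟨hθpos i, hθpos j, hθ i j hj⟩
  obtain ⟨j₀, hj₀⟩ : ∃ j, j ∈ G.neighborFinset i := by
    rw [← SimpleGraph.card_neighborFinset_eq_degree] at hdeg
    exact Finset.card_pos.1 hdeg
  have h1i : (0:ℝ) < 1 - θ i := by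
    have := hedge j₀ hj₀; linarith [this.2.1, this.2.2]
  have hAfac : ∀ j ∈ G.neighborFinset i, (0:ℝ) < 1 - θ j := by
    intro j hj; have := hedge j hj; linarith [this.1, this.2.2]
  have hBfac : ∀ j ∈ G.neighborFinset i, (0:ℝ) < 1 - θ i - θ j := by
    intro j hj; have := hedge j hj; linarith [this.2.2]
  have hzj : ∀ j ∈ G.neighborFinset i, z j = false := by
    intro j hj
    rw [SimpleGraph.mem_neighborFinset] at hj
    have := hind i j hj
    rw [hi] at this
    simpa using this
  have hz'i : z' i = false := by simp [hz']
  have hz'j : ∀ j ∈ G.neighborFinset i, z' j = false := by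
    intro j hj
    rw [hz', Function.update_apply]
    rw [if_neg, hzj j hj]
    intro hji
    rw [SimpleGraph.mem_neighborFinset, hji] at hj
    exact G.irrefl hj
  -- vertex products
  set P := ∏ x ∈ Finset.univ.erase i, (if z x then θ x else 1 - θ x) with hP
  have hv : (∏ x, if z x then θ x else 1 - θ x) = θ i * P := by
    rw [← Finset.mul_prod_erase Finset.univ _ (Finset.mem_univ i), hi]
    simp [hP]
  have hv' : (∏ x, if z' x then θ x else 1 - θ x) = (1 - θ i) * P := by
    rw [← Finset.mul_prod_erase Finset.univ _ (Finset.mem_univ i), hz'i]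
    simp only [Bool.false_eq_true, if_false]
    congr 1
    apply Finset.prod_congr rfl
    intro x hx
    rw [hz', Function.update_of_ne (Finset.ne_of_mem_erase hx)]
  -- edge products
  set Q := ∏ e ∈ (hcEF G).filter (fun e => ¬ i ∈ e), hcK θ z e with hQ
  have hQ' : ∏ e ∈ (hcEF G).filter (fun e => ¬ i ∈ e), hcK θ z' e = Q := by
    apply Finset.prod_congr rfl
    intro e he
    have hie : ¬ i ∈ e := (Finset.mem_filter.1 he).2
    induction e with
    | _ a b =>
      simp only [hcK_mk]
      apply hcH_congr
      · rw [hz', Function.update_of_ne]; intro h; exact hie (h ▸ Sym2.mem_mk_left a b)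
      · rw [hz', Function.update_of_ne]; intro h; exact hie (h ▸ Sym2.mem_mk_right a b)
  have hEz : ∏ e ∈ hcEF G, hcK θ z e
      = (∏ j ∈ G.neighborFinset i, (1 - θ j)⁻¹) * Q := by
    rw [← Finset.prod_filter_mul_prod_filter_not (hcEF G) (fun e => i ∈ e)]
    congr 1
    rw [prod_incident]
    apply Finset.prod_congr rfl
    intro j hj
    simp [hcH, hi, hzj j hj]
  have hEz' : ∏ e ∈ hcEF G, hcK θ z' e
      = (∏ j ∈ G.neighborFinset i, ((1 - θ i - θ j) / ((1 - θ i) * (1 - θ j)))) * Q := by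
    rw [← Finset.prod_filter_mul_prod_filter_not (hcEF G) (fun e => i ∈ e), hQ']
    congr 1
    rw [prod_incident]
    apply Finset.prod_congr rfl
    intro j hj
    simp [hcH, hz'i, hz'j j hj]
  -- assemble
  set A := ∏ j ∈ G.neighborFinset i, (1 - θ j) with hA
  set B := ∏ j ∈ G.neighborFinset i, (1 - θ i - θ j) with hB
  have hApos : 0 < A := Finset.prod_pos hAfac
  have hBpos : 0 < B := Finset.prod_pos hBfac
  obtain ⟨m, hm⟩ : ∃ m, G.degree i = m + 1 := ⟨G.degree i - 1, by omega⟩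
  have hcard : (G.neighborFinset i).card = m + 1 := by
    rw [SimpleGraph.card_neighborFinset_eq_degree, hm]
  have hinv : ∏ j ∈ G.neighborFinset i, (1 - θ j)⁻¹ = A⁻¹ := by
    rw [hA, ← Finset.prod_inv_distrib]
  have hdiv : ∏ j ∈ G.neighborFinset i, ((1 - θ i - θ j) / ((1 - θ i) * (1 - θ j)))
      = B / ((1 - θ i) ^ (m + 1) * A) := by
    rw [Finset.prod_div_distrib, Finset.prod_mul_distrib, Finset.prod_const, hcard]
  rw [hcR, hcR, hv, hv', hEz, hEz', hinv, hdiv, hν i, hm]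
  simp only [Nat.add_sub_cancel]
  rw [← hB]
  have h1 : (1:ℝ) - θ i ≠ 0 := ne_of_gt h1i
  have h2 : A ≠ 0 := ne_of_gt hApos
  have h3 : B ≠ 0 := ne_of_gt hBpos
  field_simp
  ring


lemma hcWeight_flip (ν : Fin n → ℝ) {z : Fin n → Bool} {i : Fin n} (hi : z i = true) :
    hcWeight ν z = ν i * hcWeight ν (Function.update z i false) := by
  unfold hcWeight
  rw [← Finset.mul_prod_erase Finset.univ _ (Finset.mem_univ i), hi,
    ← Finset.mul_prod_erase Finset.univ
      (fun x => if Function.update z i false x then ν x else 1) (Finset.mem_univ i)]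
  simp only [Function.update_self, Bool.false_eq_true, if_false, if_true, mul_one, one_mul]
  congr 1
  apply Finset.prod_congr rfl
  intro x hx
  rw [Function.update_of_ne (Finset.ne_of_mem_erase hx)]

lemma hcIndep_update_false {A : Fin n → Fin n → Prop} {z : Fin n → Bool}
    (h : hcIndep A z) (i : Fin n) : hcIndep A (Function.update z i false) := by
  intro a b hab ⟨ha, hb⟩
  apply h a b hab
  constructor
  · rcases eq_or_ne a i with rfl | hne
    · simp at ha
    · rwa [Function.update_of_ne hne] at ha
  · rcases eq_or_ne b i with rfl | hne
    · simp at hb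
    · rwa [Function.update_of_ne hne] at hb

/-- Lemma A : on independent sets, the hard-core weight is proportional to hcR -/
lemma weight_mul_R0 (G : SimpleGraph (Fin n)) [DecidableRel G.Adj] (θ : Fin n → ℝ)
    (hθpos : ∀ i, 0 < θ i) (hθ : ∀ i j, G.Adj i j → θ i + θ j < 1)
    (ν : Fin n → ℝ)
    (hν : ∀ i, ν i = θ i * (1 - θ i) ^ (G.degree i - 1) /
      ∏ j ∈ G.neighborFinset i, (1 - θ i - θ j))
    (hdeg : ∀ i, 0 < G.degree i) :
    ∀ z, hcIndep G.Adj z →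
      hcWeight ν z * hcR G θ (fun _ => false) = hcR G θ z := by
  suffices H : ∀ k (z : Fin n → Bool),
      (Finset.univ.filter (fun j => z j = true)).card = k → hcIndep G.Adj z →
      hcWeight ν z * hcR G θ (fun _ => false) = hcR G θ z by
    intro z hz; exact H _ z rfl hz
  intro k
  induction k with
  | zero =>
    intro z hc hind
    have hz : z = fun _ => false := by
      funext j
      by_contra hj
      have hj' : z j = true := by
        cases hzz : z j
        · exact absurd hzz hj
        · rfl
      have : j ∈ Finset.univ.filter (fun j => z j = true) := by
        simp [hj']
      rw [Finset.card_eq_zero] at hc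
      rw [hc] at this
      simp at this
    subst hz
    have : hcWeight ν (fun _ => false) = 1 := by simp [hcWeight]
    rw [this, one_mul]
  | succ k ih =>
    intro z hc hind
    have hne : (Finset.univ.filter (fun j => z j = true)).Nonempty := by
      rw [← Finset.card_pos, hc]; omega
    obtain ⟨i, hi⟩ := hne
    have hzi : z i = true := (Finset.mem_filter.1 hi).2
    set z' := Function.update z i false with hz'
    have hfe : Finset.univ.filter (fun j => z' j = true)
        = (Finset.univ.filter (fun j => z j = true)).erase i := by
      ext j
      simp only [Finset.mem_filter, Finset.mem_erase, Finset.mem_univ, true_and]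
      constructor
      · intro hj
        rcases eq_or_ne j i with rfl | hne2
        · rw [hz'] at hj; simp at hj
        · rw [hz', Function.update_of_ne hne2] at hj; exact ⟨hne2, hj⟩
      · rintro ⟨hne2, hj⟩
        rw [hz', Function.update_of_ne hne2]; exact hj
    have hc' : (Finset.univ.filter (fun j => z' j = true)).card = k := by
      rw [hfe, Finset.card_erase_of_mem hi, hc]
      omega
    have hind' := hcIndep_update_false hind i
    rw [hcWeight_flip ν hzi, hcR_flip G θ hθpos hθ ν hν hind hzi (hdeg i), mul_assoc,
      ih z' hc' hind']


end HCaux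

open HCaux in
/-- tree conflict graph, marginals match targets under the tree formula. -/
theorem stmt2 (n : ℕ) (hn : 2 ≤ n) (G : SimpleGraph (Fin n)) [DecidableRel G.Adj]
    (hG : G.IsTree) (θ : Fin n → ℝ) (hθpos : ∀ i, 0 < θ i)
    (hθ : ∀ i j, G.Adj i j → θ i + θ j < 1) (ν : Fin n → ℝ)
    (hν : ∀ i, ν i = θ i * (1 - θ i) ^ (G.degree i - 1) /
      ∏ j ∈ G.neighborFinset i, (1 - θ i - θ j)) :
    ∀ i, hcMarginal n G.Adj ν i = θ i := by
  intro i
  -- every vertex has a neighbour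
  have hnb : ∀ v : Fin n, ∃ w, G.Adj v w := by
    intro v
    obtain ⟨w, hw⟩ := Fintype.exists_ne_of_one_lt_card (by simp; omega) v
    have hr : G.Reachable v w := hG.isConnected.preconnected v w
    obtain ⟨p⟩ := hr
    cases p with
    | nil => exact absurd rfl hw
    | cons h q => exact ⟨_, h⟩
  have hdeg : ∀ v, 0 < G.degree v := fun v =>
    (SimpleGraph.degree_pos_iff_exists_adj G v).2 (hnb v)
  have hθ1 : ∀ v, θ v < 1 := by
    intro v
    obtain ⟨w, hw⟩ := hnb v
    have := hθ v w hw
    have := hθpos w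
    linarith
  have hνpos : ∀ v, 0 < ν v := by
    intro v
    rw [hν v]
    apply div_pos
    · apply mul_pos (hθpos v)
      exact pow_pos (by linarith [hθ1 v]) _
    · apply Finset.prod_pos
      intro j hj
      rw [SimpleGraph.mem_neighborFinset] at hj
      have := hθ v j hj
      linarith
  set z₀ : Fin n → Bool := fun _ => false with hz₀
  have hIz₀ : hcIndep G.Adj z₀ := by
    intro a b hab hz
    simp [hz₀] at hz
  have hR0 : 0 < hcR G θ z₀ := by
    apply mul_pos
    · apply Finset.prod_pos
      intro v _
      simp only [hz₀, Bool.false_eq_true, if_false]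
      linarith [hθ1 v]
    · apply Finset.prod_pos
      intro e heEF
      have he' := mem_hcEF.1 heEF
      induction e with
      | _ a b =>
        rw [SimpleGraph.mem_edgeSet] at he'
        have hab := hθ a b he'
        have h1a : (0:ℝ) < 1 - θ a := by linarith [hθpos b]
        have h1b : (0:ℝ) < 1 - θ b := by linarith [hθpos a]
        have : hcK θ z₀ s(a, b) = (1 - θ a - θ b) / ((1 - θ a) * (1 - θ b)) := by
          simp [hcH, hz₀]
        rw [this]
        apply div_pos (by linarith) (mul_pos h1a h1b)
  have hW := weight_mul_R0 G θ hθpos hθ ν hν hdeg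
  have hZpos : 0 < hcZ n G.Adj ν := by
    unfold hcZ
    have hterm : (if hcIndep G.Adj z₀ then hcWeight ν z₀ else 0) = 1 := by
      rw [if_pos hIz₀]
      simp [hcWeight, hz₀]
    have hnn : ∀ z : Fin n → Bool, z ∈ (Finset.univ : Finset (Fin n → Bool)) →
        0 ≤ (if hcIndep G.Adj z then hcWeight ν z else 0) := by
      intro z _
      by_cases hz : hcIndep G.Adj z
      · rw [if_pos hz]
        apply Finset.prod_nonneg
        intro x _
        by_cases hx : z x = true
        · rw [if_pos hx]; exact le_of_lt (hνpos x)
        · rw [if_neg hx]; norm_num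
      · rw [if_neg hz]
    have := Finset.single_le_sum hnn (Finset.mem_univ z₀)
    rw [hterm] at this
    linarith
  have hZR : hcZ n G.Adj ν * hcR G θ z₀ = hcT G θ (fun _ => 1) := by
    unfold hcZ hcT
    rw [Finset.sum_mul]
    apply Finset.sum_congr rfl
    intro z _
    by_cases hz : hcIndep G.Adj z
    · rw [if_pos hz, if_pos hz]
      simpa using hW z hz
    · rw [if_neg hz, if_neg hz, zero_mul]
  have hNR : (∑ z : Fin n → Bool, if hcIndep G.Adj z ∧ z i = true then hcWeight ν z else 0)
      * hcR G θ z₀ = hcT G θ (fun z => if z i then 1 else 0) := by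
    unfold hcT
    rw [Finset.sum_mul]
    apply Finset.sum_congr rfl
    intro z _
    by_cases hz : hcIndep G.Adj z
    · by_cases hzi : z i = true
      · rw [if_pos ⟨hz, hzi⟩, if_pos hz]
        simp only [hzi, if_true, mul_one]
        exact hW z hz
      · rw [if_neg (fun h => hzi h.2), if_pos hz, zero_mul]
        simp [hzi]
    · rw [if_neg (fun h => hz h.1), if_neg hz, zero_mul]
  have hmain := hcT_marg θ hθpos (hcEF G).card G rfl hG.2 hθ i
  have hcancel : (∑ z : Fin n → Bool,
        if hcIndep G.Adj z ∧ z i = true then hcWeight ν z else 0) * hcR G θ z₀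
      = (θ i * hcZ n G.Adj ν) * hcR G θ z₀ := by
    rw [hNR, hmain, ← hZR]
    ring
  have hkey := mul_right_cancel₀ (ne_of_gt hR0) hcancel
  unfold hcMarginal
  rw [hkey, mul_div_assoc, div_self (ne_of_gt hZpos), mul_one]
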